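/- arXiv:2408.12848 — 2 statements merged into one kernel-verified Lean document; each statement's English description precedes it below -/
import Mathlib

section
/- Let x, y, e be vectors in a complex Hilbert space H with ‖e‖ = 1. Then |⟨x, e⟩⟨e, y⟩| ≤ sqrt(log((1/2)e^{‖x‖²‖y‖²} + (1/2)e^{|⟨x,y⟩|²})) ≤ ‖x‖‖y‖. -/
open scoped InnerProductSpace
open Set Filter

variable {H : Type*} [NormedAddCommGroup H] [InnerProductSpace ℂ H] [CompleteSpace H]

/-- The numerical radius of a bounded linear operator. -/
noncomputable def numRad (T : H →L[ℂ] H) : ℝ :=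
  ⨆ x : {x : H // ‖x‖ = 1}, ‖(⟪T x, x⟫_ℂ)‖

/-- The absolute value `|T| = (T*T)^(1/2)` of a bounded linear operator. -/
noncomputable def opAbs (T : H →L[ℂ] H) : H →L[ℂ] H := CFC.sqrt (star T * T)

theorem buzano' (x y e : H) (he : ‖e‖ = 1) :
    2 * ‖⟪x, e⟫_ℂ * ⟪e, y⟫_ℂ‖ ≤ ‖x‖ * ‖y‖ + ‖⟪x, y⟫_ℂ‖ := by
  set c : ℂ := ⟪e, y⟫_ℂ with hc
  set z : H := (2 * c) • e - y with hz
  have hee : ⟪e, e⟫_ℂ = 1 := by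
    rw [inner_self_eq_norm_sq_to_K, he]; norm_num
  have hye : ⟪y, e⟫_ℂ = starRingEnd ℂ c := by rw [hc, inner_conj_symm]
  have hzz : ⟪z, z⟫_ℂ = ⟪y, y⟫_ℂ := by
    rw [hz]; simp only [inner_sub_left, inner_sub_right, inner_smul_left, inner_smul_right, hee, hye]
    rw [show (starRingEnd ℂ) (2*c) = 2 * (starRingEnd ℂ) c from by rw [map_mul, Complex.conj_ofNat], ← hc]
    ring
  have hznorm : ‖z‖ = ‖y‖ := by
    have h2 : ‖z‖^2 = ‖y‖^2 := by
      rw [InnerProductSpace.norm_sq_eq_re_inner (𝕜 := ℂ), InnerProductSpace.norm_sq_eq_re_inner (𝕜 := ℂ), hzz]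
    nlinarith [norm_nonneg z, norm_nonneg y]
  have hxz : ⟪x, z⟫_ℂ = 2 * c * ⟪x, e⟫_ℂ - ⟪x, y⟫_ℂ := by
    simp [hz, inner_sub_right, inner_smul_right]
  have hcs : ‖⟪x, z⟫_ℂ‖ ≤ ‖x‖ * ‖y‖ := by
    calc ‖⟪x, z⟫_ℂ‖ ≤ ‖x‖ * ‖z‖ := norm_inner_le_norm x z
    _ = ‖x‖ * ‖y‖ := by rw [hznorm]
  calc 2 * ‖⟪x, e⟫_ℂ * ⟪e, y⟫_ℂ‖ = ‖⟪x, z⟫_ℂ + ⟪x, y⟫_ℂ‖ := by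
        rw [hxz]; rw [show 2 * c * ⟪x, e⟫_ℂ - ⟪x, y⟫_ℂ + ⟪x, y⟫_ℂ = 2 * (⟪x, e⟫_ℂ * c) by ring]
        simp [norm_mul, hc]
  _ ≤ ‖⟪x, z⟫_ℂ‖ + ‖⟪x, y⟫_ℂ‖ := norm_add_le _ _
  _ ≤ ‖x‖ * ‖y‖ + ‖⟪x, y⟫_ℂ‖ := by linarith

theorem stmt2 (x y e : H) (he : ‖e‖ = 1) :
    ‖⟪x, e⟫_ℂ * ⟪e, y⟫_ℂ‖ ≤
      Real.sqrt (Real.log ((1 / 2) * Real.exp (‖x‖ ^ 2 * ‖y‖ ^ 2) +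
        (1 / 2) * Real.exp (‖⟪x, y⟫_ℂ‖ ^ 2))) ∧
    Real.sqrt (Real.log ((1 / 2) * Real.exp (‖x‖ ^ 2 * ‖y‖ ^ 2) +
        (1 / 2) * Real.exp (‖⟪x, y⟫_ℂ‖ ^ 2))) ≤ ‖x‖ * ‖y‖ := by
  set a : ℝ := ‖x‖ * ‖y‖ with ha
  set b : ℝ := ‖⟪x, y⟫_ℂ‖ with hb
  have hxy2 : ‖x‖ ^ 2 * ‖y‖ ^ 2 = a ^ 2 := by rw [ha]; ring
  have ha0 : 0 ≤ a := mul_nonneg (norm_nonneg _) (norm_nonneg _)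
  have hb0 : 0 ≤ b := norm_nonneg _
  have hba : b ≤ a := norm_inner_le_norm x y
  set A : ℝ := (1 / 2) * Real.exp (a ^ 2) + (1 / 2) * Real.exp (b ^ 2) with hA
  have hApos : 0 < A := by positivity
  have key : Real.exp (((a + b) / 2) ^ 2) ≤ A := by
    have step1 : ((a + b) / 2) ^ 2 ≤ (a ^ 2 + b ^ 2) / 2 := by nlinarith [sq_nonneg (a - b)]
    have step2 : Real.exp ((a ^ 2 + b ^ 2) / 2) ≤ A := by
      have hu := Real.exp_pos (a ^ 2 / 2)
      have hv := Real.exp_pos (b ^ 2 / 2)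
      have huv : Real.exp ((a ^ 2 + b ^ 2) / 2) = Real.exp (a ^ 2 / 2) * Real.exp (b ^ 2 / 2) := by
        rw [← Real.exp_add]; ring_nf
      have hu2 : Real.exp (a ^ 2 / 2) ^ 2 = Real.exp (a ^ 2) := by
        rw [← Real.exp_nat_mul]; ring_nf
      have hv2 : Real.exp (b ^ 2 / 2) ^ 2 = Real.exp (b ^ 2) := by
        rw [← Real.exp_nat_mul]; ring_nf
      rw [huv, hA, ← hu2, ← hv2]
      nlinarith [sq_nonneg (Real.exp (a ^ 2 / 2) - Real.exp (b ^ 2 / 2))]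
    exact le_trans (Real.exp_le_exp.mpr step1) step2
  have hA1 : (1:ℝ) ≤ A := by
    rw [hA]; nlinarith [Real.one_le_exp (sq_nonneg a), Real.one_le_exp (sq_nonneg b)]
  have hmid : (a + b) / 2 ≤ Real.sqrt (Real.log A) := by
    rw [Real.le_sqrt (by positivity) (Real.log_nonneg hA1)]
    rw [Real.le_log_iff_exp_le hApos]
    exact key
  constructor
  · rw [hxy2]
    have hbz := buzano' x y e he
    rw [← ha, ← hb] at hbz
    calc ‖⟪x, e⟫_ℂ * ⟪e, y⟫_ℂ‖ ≤ (a + b) / 2 := by linarith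
    _ ≤ Real.sqrt (Real.log A) := hmid
  · rw [hxy2]
    have hAle : A ≤ Real.exp (a ^ 2) := by
      have : Real.exp (b ^ 2) ≤ Real.exp (a ^ 2) := by
        apply Real.exp_le_exp.mpr; nlinarith
      rw [hA]; linarith
    have hlog : Real.log A ≤ a ^ 2 := by
      rw [Real.log_le_iff_le_exp hApos]; exact hAle
    calc Real.sqrt (Real.log A) ≤ Real.sqrt (a ^ 2) := Real.sqrt_le_sqrt hlog
    _ = a := by rw [Real.sqrt_sq ha0]
end

section
/- Let T be a bounded linear operator on a complex Hilbert space H, φ an Orlicz function, and α ∈ [0,1]. Then φ(w²(T)) ≤ (α/2) φ(w(T²)) + ‖(α/4) φ(|T|²) + (1 − 3α/4) φ(|T*|²)‖. -/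
open scoped InnerProductSpace
open Set Filter Topology

variable {H : Type*} [NormedAddCommGroup H] [InnerProductSpace ℂ H] [CompleteSpace H]

section Aux

set_option linter.unusedSectionVars false

/-- Buzano's inequality. -/
lemma aux_buzano (u v e : H) (he : ‖e‖ = 1) :
    ‖⟪u, e⟫_ℂ * ⟪e, v⟫_ℂ‖ ≤ (‖⟪u, v⟫_ℂ‖ + ‖u‖ * ‖v‖) / 2 := by
  set c : ℂ := ⟪e, v⟫_ℂ with hc
  set w : H := (2:ℂ) • (c • e) - v with hw
  have hkey : ⟪u, e⟫_ℂ * c = (⟪u, v⟫_ℂ + ⟪u, w⟫_ℂ) / 2 := by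
    rw [hw, inner_sub_right, inner_smul_right, inner_smul_right]
    ring
  have hwnorm : ‖w‖ = ‖v‖ := by
    have h2 : ‖w‖ ^ 2 = ‖v‖ ^ 2 := by
      rw [hw, norm_sub_sq (𝕜 := ℂ)]
      have h3 : ⟪(2:ℂ) • (c • e), v⟫_ℂ = 2 * ((starRingEnd ℂ) c * c) := by
        rw [inner_smul_left, inner_smul_left]
        have : (starRingEnd ℂ) 2 = 2 := map_ofNat (starRingEnd ℂ) 2
        rw [this]
      have h4 : ‖(2:ℂ) • (c • e)‖ = 2 * ‖c‖ := by
        rw [norm_smul, norm_smul, he]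
        simp
      have h5 : (starRingEnd ℂ) c * c = ((‖c‖ : ℂ)) ^ 2 := by
        simpa using RCLike.conj_mul c
      rw [h3, h4, h5]
      have h6 : RCLike.re ((2:ℂ) * ((‖c‖ : ℂ)) ^ 2) = 2 * ‖c‖ ^ 2 := by
        simp [RCLike.re_to_complex, ← Complex.ofReal_pow]
      rw [h6]
      ring
    calc ‖w‖ = Real.sqrt (‖w‖ ^ 2) := (Real.sqrt_sq (norm_nonneg w)).symm
      _ = Real.sqrt (‖v‖ ^ 2) := by rw [h2]
      _ = ‖v‖ := Real.sqrt_sq (norm_nonneg v)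
  calc ‖⟪u, e⟫_ℂ * c‖ = ‖⟪u, v⟫_ℂ + ⟪u, w⟫_ℂ‖ / 2 := by rw [hkey]; simp
    _ ≤ (‖⟪u, v⟫_ℂ‖ + ‖⟪u, w⟫_ℂ‖) / 2 := by
        gcongr; exact norm_add_le _ _
    _ ≤ (‖⟪u, v⟫_ℂ‖ + ‖u‖ * ‖v‖) / 2 := by
        gcongr
        calc ‖⟪u, w⟫_ℂ‖ ≤ ‖u‖ * ‖w‖ := norm_inner_le_norm u w
          _ = ‖u‖ * ‖v‖ := by rw [hwnorm]

/-- A supporting line for a convex function on `[0, ∞)` at an interior point. -/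
lemma aux_support {φ : ℝ → ℝ} (hconv : ConvexOn ℝ (Ici 0) φ) {s : ℝ} (hs : 0 < s) :
    ∃ m : ℝ, ∀ t ∈ Ici (0:ℝ), φ s + m * (t - s) ≤ φ t := by
  set L : Set ℝ := (fun u => (φ s - φ u) / (s - u)) '' (Ico 0 s) with hL
  have hne : L.Nonempty := ⟨_, ⟨0, ⟨le_refl _, hs⟩, rfl⟩⟩
  have hslope : ∀ u ∈ Ico (0:ℝ) s, ∀ t, s < t →
      (φ s - φ u) / (s - u) ≤ (φ t - φ s) / (t - s) := by
    intro u hu t ht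
    have h0u : u ∈ Ici (0:ℝ) := mem_Ici.mpr hu.1
    have h0t : t ∈ Ici (0:ℝ) := mem_Ici.mpr (by linarith [hu.1, hu.2])
    exact hconv.slope_mono_adjacent h0u h0t hu.2 ht
  have hbdd : BddAbove L := by
    refine ⟨(φ (s+1) - φ s) / (s + 1 - s), ?_⟩
    rintro m ⟨u, hu, rfl⟩
    exact hslope u hu (s+1) (by linarith)
  refine ⟨sSup L, fun t ht => ?_⟩
  rcases lt_trichotomy t s with hts | rfl | hst
  · have hmem : (φ s - φ t) / (s - t) ∈ L := ⟨t, ⟨ht, hts⟩, rfl⟩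
    have h1 : (φ s - φ t) / (s - t) ≤ sSup L := le_csSup hbdd hmem
    have h2 : φ s - φ t ≤ sSup L * (s - t) := by
      rw [div_le_iff₀ (by linarith)] at h1
      linarith
    nlinarith
  · simp
  · have h1 : sSup L ≤ (φ t - φ s) / (t - s) :=
      csSup_le hne (by rintro m ⟨u, hu, rfl⟩; exact hslope u hu t hst)
    have h2 : sSup L * (t - s) ≤ φ t - φ s := by
      rw [le_div_iff₀ (by linarith)] at h1
      linarith
    linarith

/-- Jensen's inequality for the quadratic form of a positive operator. -/
lemma aux_jensen (A : H →L[ℂ] H) (hA : 0 ≤ A) {φ : ℝ → ℝ}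
    (hφc : ContinuousOn φ (Ici 0)) (hconv : ConvexOn ℝ (Ici 0) φ)
    (hmono : MonotoneOn φ (Ici 0)) (hφ0 : φ 0 = 0) (x : H) (hx : ‖x‖ = 1) :
    φ (RCLike.re ⟪A x, x⟫_ℂ) ≤ RCLike.re ⟪(cfc φ A) x, x⟫_ℂ := by
  have hApos : A.IsPositive := (ContinuousLinearMap.nonneg_iff_isPositive A).mp hA
  have hspec : ∀ t ∈ spectrum ℝ A, (0:ℝ) ≤ t := fun t ht => spectrum_nonneg_of_nonneg hA ht
  have hφspec : ContinuousOn φ (spectrum ℝ A) := hφc.mono (fun t ht => hspec t ht)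
  set s : ℝ := RCLike.re ⟪A x, x⟫_ℂ with hsdef
  have hs0 : 0 ≤ s := (RCLike.nonneg_iff.mp (hApos.inner_nonneg_left x)).1
  have hφnonneg : ∀ t ∈ spectrum ℝ A, 0 ≤ φ t := fun t ht =>
    hφ0 ▸ hmono (self_mem_Ici) (mem_Ici.mpr (hspec t ht)) (hspec t ht)
  rcases eq_or_lt_of_le hs0 with hse | hslt
  · rw [← hse, hφ0]
    have hcfc : (0 : H →L[ℂ] H) ≤ cfc φ A := cfc_nonneg hφnonneg
    exact (RCLike.nonneg_iff.mp (((ContinuousLinearMap.nonneg_iff_isPositive _).mp hcfc).inner_nonneg_left x)).1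
  · obtain ⟨m, hm⟩ := aux_support hconv hslt
    set c : ℝ := φ s - m * s with hcdef
    have key : (0 : H →L[ℂ] H) ≤ cfc (fun t => φ t - (m * t + c)) A := by
      apply cfc_nonneg
      intro t ht
      have := hm t (mem_Ici.mpr (hspec t ht))
      simp only [hcdef]
      linarith
    have heq : cfc (fun t => φ t - (m * t + c)) A
        = cfc φ A - (m • A + c • (1 : H →L[ℂ] H)) := by
      rw [cfc_sub _ _ A hφspec (by fun_prop)]
      congr 1
      have h1 : cfc (fun t : ℝ => m * t + c) A
          = cfc (fun t : ℝ => m * t) A + cfc (fun _ : ℝ => c) A :=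
        cfc_add (a := A) (fun t : ℝ => m * t) (fun _ : ℝ => c) (by fun_prop) (by fun_prop)
      rw [h1, cfc_const_mul_id m A, cfc_const c A, Algebra.algebraMap_eq_smul_one]
    rw [heq] at key
    have hpos := (RCLike.nonneg_iff.mp (((ContinuousLinearMap.nonneg_iff_isPositive _).mp key).inner_nonneg_left x)).1
    have hexp : RCLike.re ⟪(cfc φ A - (m • A + c • (1 : H →L[ℂ] H))) x, x⟫_ℂ
        = RCLike.re ⟪(cfc φ A) x, x⟫_ℂ - (m * s + c) := by
      simp only [ContinuousLinearMap.sub_apply, ContinuousLinearMap.add_apply,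
        ContinuousLinearMap.smul_apply, ContinuousLinearMap.one_apply,
        inner_sub_left, inner_add_left]
      rw [RCLike.real_smul_eq_coe_smul (K := ℂ) m, RCLike.real_smul_eq_coe_smul (K := ℂ) c,
        inner_smul_left, inner_smul_left]
      simp only [map_sub, map_add]
      rw [RCLike.conj_ofReal, RCLike.conj_ofReal]
      rw [RCLike.re_ofReal_mul, RCLike.re_ofReal_mul]
      have : RCLike.re ⟪x, x⟫_ℂ = 1 := by
        rw [inner_self_eq_norm_sq, hx]; norm_num
      rw [this, ← hsdef]
      ring
    rw [hexp] at hpos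
    simp only [hcdef] at hpos ⊢
    linarith

lemma aux_bdd (T : H →L[ℂ] H) :
    BddAbove (range fun x : {x : H // ‖x‖ = 1} => ‖(⟪T x, x⟫_ℂ)‖) := by
  refine ⟨‖T‖, ?_⟩
  rintro _ ⟨x, rfl⟩
  calc ‖(⟪T x, x⟫_ℂ)‖ ≤ ‖T (x : H)‖ * ‖(x : H)‖ := norm_inner_le_norm _ _
    _ ≤ ‖T‖ * ‖(x : H)‖ * ‖(x : H)‖ := by gcongr; exact T.le_opNorm _
    _ = ‖T‖ := by rw [x.2]; ring

lemma aux_le_numRad (T : H →L[ℂ] H) (x : {x : H // ‖x‖ = 1}) :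
    ‖(⟪T x, x⟫_ℂ)‖ ≤ numRad T := le_ciSup (aux_bdd T) x

lemma aux_numRad_nonneg (T : H →L[ℂ] H) : 0 ≤ numRad T :=
  Real.iSup_nonneg fun _ => norm_nonneg _

lemma aux_sup_le (T : H →L[ℂ] H) {φ : ℝ → ℝ} (hφc : ContinuousOn φ (Ici 0))
    (hφ0 : φ 0 = 0) {R : ℝ}
    (hR : 0 ≤ R) (h : ∀ x : {x : H // ‖x‖ = 1}, φ (‖(⟪T x, x⟫_ℂ)‖ ^ 2) ≤ R) :
    φ (numRad T ^ 2) ≤ R := by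
  by_cases hem : Nonempty {x : H // ‖x‖ = 1}
  · set S := range fun x : {x : H // ‖x‖ = 1} => ‖(⟪T x, x⟫_ℂ)‖ with hS
    have hW : numRad T = sSup S := rfl
    set W := numRad T with hWdef
    by_contra hlt
    push_neg at hlt
    set f : ℝ → ℝ := fun t => φ (t ^ 2) with hf
    have hW0 : 0 ≤ W := aux_numRad_nonneg T
    have hWc : W ∈ closure S := by
      rw [hW]; exact csSup_mem_closure (range_nonempty _) (aux_bdd T)
    have hne : (𝓝[S] W).NeBot := mem_closure_iff_nhdsWithin_neBot.mp hWc
    have hfc : ContinuousWithinAt f (Ici 0) W := by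
      apply ContinuousWithinAt.comp (hφc.continuousWithinAt (mem_Ici.mpr (by positivity)))
        ((continuous_pow 2).continuousWithinAt)
      intro t ht
      exact mem_Ici.mpr (by positivity)
    have hSsub : S ⊆ Ici 0 := by rintro _ ⟨x, rfl⟩; exact norm_nonneg _
    have htend : Tendsto f (𝓝[S] W) (𝓝 (f W)) :=
      hfc.tendsto.mono_left (nhdsWithin_mono W hSsub)
    have hev : ∀ᶠ t in 𝓝[S] W, R < f t := htend.eventually (eventually_gt_nhds hlt)
    obtain ⟨t, hRt, htS⟩ := (hev.and self_mem_nhdsWithin).exists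
    obtain ⟨x, rfl⟩ := htS
    exact absurd (h x) (not_le.mpr hRt)
  · haveI := not_nonempty_iff.mp hem
    have hz : numRad T = 0 := by
      rw [numRad, iSup, range_eq_empty, Real.sSup_empty]
    rw [hz]
    have h0 : φ 0 ≤ R := by rw [hφ0]; exact hR
    simpa using h0

end Aux


/-- Pure real-number arithmetic part of the main estimate. -/
lemma aux_arith {φ : ℝ → ℝ} (hφconv : ConvexOn ℝ (Ici 0) φ)
    (hφmono : MonotoneOn φ (Ici 0)) (hφ0 : φ 0 = 0)
    {α s a b n p J1 J2 M : ℝ} (hα0 : 0 ≤ α) (hα1 : α ≤ 1)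
    (hs0 : 0 ≤ s) (ha0 : 0 ≤ a) (hb0 : 0 ≤ b) (hn0 : 0 ≤ n) (hp0 : 0 ≤ p)
    (hsb : s ≤ b) (hbuz : s ^ 2 ≤ (n + a * b) / 2)
    (hj1 : φ (a ^ 2) ≤ J1) (hj2 : φ (b ^ 2) ≤ J2) (hn : n ≤ p)
    (hfin : (α / 4) * J1 + (1 - 3 * α / 4) * J2 ≤ M) :
    φ (s ^ 2) ≤ (α / 2) * φ p + M := by
  have hφge : ∀ t, 0 ≤ t → 0 ≤ φ t := fun t ht =>
    hφ0 ▸ hφmono self_mem_Ici (mem_Ici.mpr ht) ht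
  have hab0 : (0:ℝ) ≤ a * b := mul_nonneg ha0 hb0
  have hu0 : (0:ℝ) ≤ (n + a * b) / 2 := by linarith
  have hs2b2 : s ^ 2 ≤ b ^ 2 := by
    have := mul_self_le_mul_self hs0 hsb
    nlinarith [this]
  have hcomb : s ^ 2 ≤ α * ((n + a * b) / 2) + (1 - α) * b ^ 2 := by
    have c1 : α * (s ^ 2) ≤ α * ((n + a * b) / 2) := mul_le_mul_of_nonneg_left hbuz hα0
    have c2 : (1 - α) * (s ^ 2) ≤ (1 - α) * (b ^ 2) :=
      mul_le_mul_of_nonneg_left hs2b2 (by linarith)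
    nlinarith [c1, c2]
  have step1 : φ (s ^ 2) ≤ α * φ ((n + a * b) / 2) + (1 - α) * φ (b ^ 2) := by
    have hcx := hφconv.2 (mem_Ici.mpr hu0) (mem_Ici.mpr (by positivity : (0:ℝ) ≤ b ^ 2))
      hα0 (by linarith : (0:ℝ) ≤ 1 - α) (by ring)
    simp only [smul_eq_mul] at hcx
    have hmono := hφmono (mem_Ici.mpr (by positivity : (0:ℝ) ≤ s ^ 2))
      (mem_Ici.mpr (le_trans (by positivity : (0:ℝ) ≤ s ^ 2) hcomb)) hcomb
    linarith
  have step2 : φ ((n + a * b) / 2) ≤ (φ n + φ (a * b)) / 2 := by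
    have hcx := hφconv.2 (mem_Ici.mpr hn0) (mem_Ici.mpr hab0)
      (by norm_num : (0:ℝ) ≤ 1/2) (by norm_num : (0:ℝ) ≤ 1/2) (by norm_num)
    simp only [smul_eq_mul] at hcx
    have heq : (1/2 : ℝ) * n + (1/2 : ℝ) * (a * b) = (n + a * b) / 2 := by ring
    rw [heq] at hcx
    linarith
  have step3 : φ (a * b) ≤ (φ (a ^ 2) + φ (b ^ 2)) / 2 := by
    have hab : a * b ≤ (a ^ 2 + b ^ 2) / 2 := by nlinarith [sq_nonneg (a - b)]
    have hm := hφmono (mem_Ici.mpr hab0)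
      (mem_Ici.mpr (by positivity : (0:ℝ) ≤ (a ^ 2 + b ^ 2) / 2)) hab
    have hcx := hφconv.2 (mem_Ici.mpr (by positivity : (0:ℝ) ≤ a ^ 2))
      (mem_Ici.mpr (by positivity : (0:ℝ) ≤ b ^ 2))
      (by norm_num : (0:ℝ) ≤ 1/2) (by norm_num : (0:ℝ) ≤ 1/2) (by norm_num)
    simp only [smul_eq_mul] at hcx
    have heq : (1/2 : ℝ) * a ^ 2 + (1/2 : ℝ) * b ^ 2 = (a ^ 2 + b ^ 2) / 2 := by ring
    rw [heq] at hcx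
    linarith
  have hnp : φ n ≤ φ p := hφmono (mem_Ici.mpr hn0) (mem_Ici.mpr hp0) hn
  have coef1 : (0:ℝ) ≤ α / 4 := by linarith
  have coef2 : (0:ℝ) ≤ 1 - 3 * α / 4 := by linarith
  have m1 : α * φ ((n + a * b) / 2) ≤ α * ((φ n + φ (a * b)) / 2) :=
    mul_le_mul_of_nonneg_left step2 hα0
  have m2 : α * ((φ n + φ (a * b)) / 2)
      ≤ α * ((φ n + (φ (a ^ 2) + φ (b ^ 2)) / 2) / 2) :=
    mul_le_mul_of_nonneg_left (by linarith) hα0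
  have m3 : (α / 4) * φ (a ^ 2) ≤ (α / 4) * J1 := mul_le_mul_of_nonneg_left hj1 coef1
  have m4 : (1 - 3 * α / 4) * φ (b ^ 2) ≤ (1 - 3 * α / 4) * J2 :=
    mul_le_mul_of_nonneg_left hj2 coef2
  have m5 : (α / 2) * φ n ≤ (α / 2) * φ p := mul_le_mul_of_nonneg_left hnp (by linarith)
  have hφb2 : 0 ≤ φ (b ^ 2) := hφge _ (by positivity)
  linarith [step1, m1, m2, m3, m4, m5, hφb2, hfin]

theorem stmt11 (T : H →L[ℂ] H)
    (φ : ℝ → ℝ) (hφc : ContinuousOn φ (Ici 0)) (hφconv : ConvexOn ℝ (Ici 0) φ)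
    (hφmono : MonotoneOn φ (Ici 0)) (hφ0 : φ 0 = 0) (hφpos : ∀ t > 0, 0 < φ t)
    (hφtop : Tendsto φ atTop atTop) (α : ℝ) (hα : α ∈ Icc (0:ℝ) 1) :
    φ (numRad T ^ 2) ≤
      (α / 2) * φ (numRad (T * T)) +
      ‖(α / 4) • cfc φ (opAbs T ^ 2) + (1 - 3 * α / 4) • cfc φ (opAbs (star T) ^ 2)‖ := by
  obtain ⟨hα0, hα1⟩ := hα
  have hφge : ∀ t, 0 ≤ t → 0 ≤ φ t := fun t ht =>
    hφ0 ▸ hφmono self_mem_Ici (mem_Ici.mpr ht) ht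
  have hAeq : opAbs T ^ 2 = star T * T := CFC.sq_sqrt _ (star_mul_self_nonneg T)
  have hBeq : opAbs (star T) ^ 2 = T * star T := by
    rw [opAbs, CFC.sq_sqrt _ (star_mul_self_nonneg (star T)), star_star]
  have hApos : (0 : H →L[ℂ] H) ≤ opAbs T ^ 2 := by
    rw [hAeq]; exact star_mul_self_nonneg T
  have hBpos : (0 : H →L[ℂ] H) ≤ opAbs (star T) ^ 2 := by
    rw [hBeq]; exact mul_star_self_nonneg T
  have hnum2 : 0 ≤ numRad (T * T) := aux_numRad_nonneg _
  have hR0 : 0 ≤ (α / 2) * φ (numRad (T * T)) +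
      ‖(α / 4) • cfc φ (opAbs T ^ 2) + (1 - 3 * α / 4) • cfc φ (opAbs (star T) ^ 2)‖ :=
    add_nonneg (mul_nonneg (by linarith) (hφge _ hnum2)) (norm_nonneg _)
  apply aux_sup_le T hφc hφ0 hR0
  intro x
  have hx : ‖(x : H)‖ = 1 := x.2
  -- s ≤ b
  have hsb : ‖⟪T x, x⟫_ℂ‖ ≤ ‖(star T) (x : H)‖ := by
    have h1 : ⟪(star T) (x : H), x⟫_ℂ = ⟪(x : H), T x⟫_ℂ := by
      rw [ContinuousLinearMap.star_eq_adjoint, ContinuousLinearMap.adjoint_inner_left]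
    calc ‖⟪T x, x⟫_ℂ‖ = ‖⟪(star T) (x : H), x⟫_ℂ‖ := by rw [h1, ← norm_inner_symm]
      _ ≤ ‖(star T) (x : H)‖ * ‖(x : H)‖ := norm_inner_le_norm _ _
      _ = ‖(star T) (x : H)‖ := by rw [hx, mul_one]
  -- Buzano
  have hbuz : ‖⟪T x, x⟫_ℂ‖ ^ 2
      ≤ (‖⟪(T * T) x, x⟫_ℂ‖ + ‖T (x : H)‖ * ‖(star T) (x : H)‖) / 2 := by
    have he1 : ⟪(x : H), (star T) (x : H)⟫_ℂ = ⟪T x, x⟫_ℂ := by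
      rw [ContinuousLinearMap.star_eq_adjoint, ContinuousLinearMap.adjoint_inner_right]
    have h3 : ⟪T x, (star T) (x : H)⟫_ℂ = ⟪(T * T) x, x⟫_ℂ := by
      rw [ContinuousLinearMap.star_eq_adjoint, ContinuousLinearMap.adjoint_inner_right,
        ContinuousLinearMap.mul_apply]
    have h2 := aux_buzano (T x) ((star T) (x : H)) (x : H) hx
    rw [he1, h3] at h2
    calc ‖⟪T x, x⟫_ℂ‖ ^ 2 = ‖⟪T x, x⟫_ℂ * ⟪T x, x⟫_ℂ‖ := by rw [norm_mul]; ring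
      _ ≤ _ := h2
  -- Jensen
  have ha2 : ‖T (x : H)‖ ^ 2 = RCLike.re ⟪(opAbs T ^ 2) (x : H), x⟫_ℂ := by
    rw [hAeq, ContinuousLinearMap.mul_apply, ContinuousLinearMap.star_eq_adjoint,
      ContinuousLinearMap.adjoint_inner_left, inner_self_eq_norm_sq]
  have hb2 : ‖(star T) (x : H)‖ ^ 2
      = RCLike.re ⟪(opAbs (star T) ^ 2) (x : H), x⟫_ℂ := by
    rw [hBeq, ContinuousLinearMap.mul_apply]
    have hTz : T ((star T) (x : H)) =
        (ContinuousLinearMap.adjoint (star T)) ((star T) (x : H)) := by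
      rw [← ContinuousLinearMap.star_eq_adjoint, star_star]
    rw [hTz, ContinuousLinearMap.adjoint_inner_left, inner_self_eq_norm_sq]
  have hj1 : φ (‖T (x : H)‖ ^ 2) ≤ RCLike.re ⟪(cfc φ (opAbs T ^ 2)) (x : H), x⟫_ℂ := by
    rw [ha2]; exact aux_jensen _ hApos hφc hφconv hφmono hφ0 (x : H) hx
  have hj2 : φ (‖(star T) (x : H)‖ ^ 2)
      ≤ RCLike.re ⟪(cfc φ (opAbs (star T) ^ 2)) (x : H), x⟫_ℂ := by
    rw [hb2]; exact aux_jensen _ hBpos hφc hφconv hφmono hφ0 (x : H) hx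
  -- operator norm bound
  set Op : H →L[ℂ] H :=
    (α / 4) • cfc φ (opAbs T ^ 2) + (1 - 3 * α / 4) • cfc φ (opAbs (star T) ^ 2) with hOp
  have hre : RCLike.re ⟪Op (x : H), x⟫_ℂ
      = (α / 4) * RCLike.re ⟪(cfc φ (opAbs T ^ 2)) (x : H), x⟫_ℂ
        + (1 - 3 * α / 4) * RCLike.re ⟪(cfc φ (opAbs (star T) ^ 2)) (x : H), x⟫_ℂ := by
    rw [hOp]
    simp only [ContinuousLinearMap.add_apply, ContinuousLinearMap.smul_apply, inner_add_left]
    rw [RCLike.real_smul_eq_coe_smul (K := ℂ) (α / 4),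
      RCLike.real_smul_eq_coe_smul (K := ℂ) (1 - 3 * α / 4),
      inner_smul_left, inner_smul_left]
    simp only [map_add, RCLike.conj_ofReal, RCLike.re_ofReal_mul]
  have hfin : (α / 4) * RCLike.re ⟪(cfc φ (opAbs T ^ 2)) (x : H), x⟫_ℂ
      + (1 - 3 * α / 4) * RCLike.re ⟪(cfc φ (opAbs (star T) ^ 2)) (x : H), x⟫_ℂ
      ≤ ‖Op‖ := by
    rw [← hre]
    calc RCLike.re ⟪Op (x : H), x⟫_ℂ ≤ ‖⟪Op (x : H), x⟫_ℂ‖ := RCLike.re_le_norm _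
      _ ≤ ‖Op (x : H)‖ * ‖(x : H)‖ := norm_inner_le_norm _ _
      _ ≤ ‖Op‖ * ‖(x : H)‖ * ‖(x : H)‖ := by gcongr; exact Op.le_opNorm _
      _ = ‖Op‖ := by rw [hx]; ring
  exact aux_arith hφconv hφmono hφ0 hα0 hα1 (norm_nonneg _) (norm_nonneg _)
    (norm_nonneg _) (norm_nonneg _) hnum2 hsb hbuz hj1 hj2
    (aux_le_numRad (T * T) x) hfin
end
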